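/- A 5-dimensional almost nearly cosymplectic non-cosymplectic manifold is η-Einstein: its Ricci tensor satisfies R̄ic(X,Y) = 2λ² ḡ(X,Y) + 2λ² η̄(X)η̄(Y), and in particular its scalar curvature equals 12λ². -/

import Mathlib

open scoped BigOperators

/-- A 5-dimensional almost nearly cosymplectic non-cosymplectic
manifold is η-Einstein: `R̄ic(X,Y) = 2λ²ḡ(X,Y) + 2λ²η̄(X)η̄(Y)`, and its scalar
curvature equals `12λ²`.  The underlying nearly cosymplectic structure satisfies
`h² = -λ²(I - η⊗ξ)`, is Einstein with `Ric = 4λ²g`, `tr(h²) = -4λ²`, and the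
Ricci tensors are related by the D-homothety Ricci formula; the scalar curvature
of `ḡ` is computed with a `ḡ`-orthonormal basis `b`. -/
theorem stmt_12 {V : Type*} [AddCommGroup V] [Module ℝ V] [FiniteDimensional ℝ V]
    (g : V →ₗ[ℝ] V →ₗ[ℝ] ℝ) (η : V →ₗ[ℝ] ℝ) (ξ : V)
    (h : V →ₗ[ℝ] V) (lam : ℝ) (hlam : lam ≠ 0)
    (Ric Ricb : V → V → ℝ) (trh2 : ℝ)
    (gb : V → V → ℝ) (ηb : V → ℝ)
    (b : Module.Basis (Fin 5) ℝ V)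
    (hηξ : η ξ = 1)
    (hη : ∀ X, η X = g X ξ)
    (hgsymm : ∀ X Y, g X Y = g Y X)
    (hh2 : ∀ X, h (h X) = -(lam ^ 2) • X + (lam ^ 2 * η X) • ξ)
    (htrh2 : trh2 = -(4 * lam ^ 2))
    (hEinstein : ∀ X Y, Ric X Y = 4 * lam ^ 2 * g X Y)
    (hgb : ∀ X Y, gb X Y = (3/2) * g X Y + (3/4) * (η X * η Y))
    (hηb : ∀ X, ηb X = (3/2) * η X)
    (hRicrel : ∀ X Y, Ricb X Y = Ric X Y + g (h (h X)) Y
        - (5/4) * trh2 * (η X * η Y))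
    (horth : ∀ i j, gb (b i) (b j) = if i = j then 1 else 0) :
    (∀ X Y, Ricb X Y = 2 * lam ^ 2 * gb X Y + 2 * lam ^ 2 * (ηb X * ηb Y)) ∧
    (∑ i, Ricb (b i) (b i) = 12 * lam ^ 2) := by

  have hgξY : ∀ Y, g ξ Y = η Y := fun Y => by rw [hgsymm, ← hη]
  have hpt : ∀ X Y, Ricb X Y = 2 * lam ^ 2 * gb X Y + 2 * lam ^ 2 * (ηb X * ηb Y) := by
    intro X Y
    rw [hRicrel, hEinstein, hh2, htrh2, hgb, hηb, hηb]
    simp only [map_add, map_smul, map_neg, LinearMap.add_apply, LinearMap.smul_apply,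
      LinearMap.neg_apply, smul_eq_mul, hgξY, hη X]
    ring
  refine ⟨hpt, ?_⟩
  set v : V := (2/3 : ℝ) • ξ with hv
  have hηbv : ∀ X, ηb X = gb X v := by
    intro X
    rw [hηb, hgb]
    simp only [hv, map_smul, smul_eq_mul, ← hη, hηξ]
    ring
  have hc : ∀ j, ηb (b j) = b.repr v j := by
    intro j
    rw [hηbv]
    set L : V →ₗ[ℝ] ℝ := (3/2 : ℝ) • (g (b j)) + ((3/4) * η (b j)) • η with hL
    have hLe : ∀ Y, gb (b j) Y = L Y := by
      intro Y
      rw [hgb, hL]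
      simp only [LinearMap.add_apply, LinearMap.smul_apply, smul_eq_mul]
      ring
    rw [hLe]
    conv_lhs => rw [← b.sum_repr v]
    rw [map_sum]
    simp only [hLe, map_smul, smul_eq_mul]
    simp only [← hLe, horth, mul_ite, mul_one, mul_zero]
    simp [Finset.sum_ite_eq]
  have hsumη : ∑ i, ηb (b i) * ηb (b i) = 1 := by
    have h1 : ∑ i, ηb (b i) * ηb (b i) = ∑ i, b.repr v i * ((3/2) * η (b i)) := by
      apply Finset.sum_congr rfl
      intro i _
      rw [← hηb, ← hc]
    rw [h1]
    have h2 : ∑ i, b.repr v i * ((3/2) * η (b i)) = (3/2) * η v := by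
      conv_rhs => rw [← b.sum_repr v]
      rw [map_sum, Finset.mul_sum]
      apply Finset.sum_congr rfl
      intro i _
      simp only [map_smul, smul_eq_mul]
      ring
    rw [h2, hv, map_smul, smul_eq_mul, hηξ]
    norm_num
  calc ∑ i, Ricb (b i) (b i)
      = ∑ i, (2 * lam ^ 2 * gb (b i) (b i) + 2 * lam ^ 2 * (ηb (b i) * ηb (b i))) := by
        exact Finset.sum_congr rfl fun i _ => hpt (b i) (b i)
    _ = ∑ i, (2 * lam ^ 2 * gb (b i) (b i)) + 2 * lam ^ 2 * ∑ i, (ηb (b i) * ηb (b i)) := by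
        rw [Finset.sum_add_distrib, Finset.mul_sum]
    _ = 12 * lam ^ 2 := by
        simp only [horth, if_pos rfl, mul_one, hsumη]
        simp [Finset.sum_const]
        ring
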